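/- If R is a ring such that every absolutely self pure left R-module is quasi injective, then R is left noetherian. -/

import Mathlib

open CategoryTheory DirectSum


universe u v w

/-- The annihilator of an element `a` of a left `R`-module, as a left ideal of `R`. -/
def annihilatorOf (R : Type u) [Ring R] {A : Type v} [AddCommGroup A] [Module R A] (a : A) :
    Submodule R R := LinearMap.ker (LinearMap.toSpanSingleton R A a)

/-- `J` belongs to the filter `Ω̄(A)` of left ideals generated by annihilators of elements of
`A`, i.e. `J` contains a finite intersection of annihilators of elements of `A`. -/
def MemOmegaBar (R : Type u) [Ring R] (A : Type v) [AddCommGroup A] [Module R A]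
    (J : Submodule R R) : Prop :=
  ∃ s : Finset A, (⨅ a ∈ s, annihilatorOf R a) ≤ J

/-- `A` is a self pure submodule of `B` (along the injection `i`): every map `f : L → A` from a
finitely generated left ideal with `ker f ∈ Ω̄(A)` which extends to a map `R → B` also extends
to a map `R → A`. -/
def IsSelfPureIn (R : Type u) [Ring R] {A : Type v} {B : Type w} [AddCommGroup A] [Module R A]
    [AddCommGroup B] [Module R B] (i : A →ₗ[R] B) : Prop :=
  ∀ L : Submodule R R, L.FG → ∀ f : L →ₗ[R] A,
    MemOmegaBar R A ((LinearMap.ker f).map L.subtype) →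
    (∃ g : R →ₗ[R] B, ∀ x : L, g x = i (f x)) →
    ∃ h : R →ₗ[R] A, ∀ x : L, h x = f x

/-- `A` is absolutely self pure: every map `f : L → A` from a finitely generated left ideal of
`R` with `ker f ∈ Ω̄(A)` extends to a map `R → A`. -/
def AbsolutelySelfPure (R : Type u) [Ring R] (A : Type v) [AddCommGroup A] [Module R A] : Prop :=
  ∀ L : Submodule R R, L.FG → ∀ f : L →ₗ[R] A,
    MemOmegaBar R A ((LinearMap.ker f).map L.subtype) →
    ∃ h : R →ₗ[R] A, ∀ x : L, h x = f x

/-- `Q` is quasi injective: every homomorphism from a submodule of `Q` into `Q` extends to an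
endomorphism of `Q`. -/
def IsQuasiInjective (R : Type u) [Ring R] (Q : Type v) [AddCommGroup Q] [Module R Q] : Prop :=
  ∀ (N : Submodule R Q) (f : N →ₗ[R] Q), ∃ g : Q →ₗ[R] Q, ∀ x : N, g x = f x

/-- `A` is a pure submodule of `B` (along `i`): for every finitely generated submodule `K` of a
finite free module and every commuting square, a map `F → A` makes the upper triangle commute. -/
def IsPureIn (R : Type u) [Ring R] {A : Type v} {B : Type w} [AddCommGroup A] [Module R A]
    [AddCommGroup B] [Module R B] (i : A →ₗ[R] B) : Prop :=
  ∀ (n : ℕ) (K : Submodule R (Fin n → R)), K.FG →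
    ∀ (f : K →ₗ[R] A) (g : (Fin n → R) →ₗ[R] B),
      (∀ x : K, g x = i (f x)) →
      ∃ h : (Fin n → R) →ₗ[R] A, ∀ x : K, h x = f x

/-- `A` is absolutely pure: every map into `A` from a finitely generated submodule of a finite
free module extends to the free module. -/
def IsAbsolutelyPure (R : Type u) [Ring R] (A : Type v) [AddCommGroup A] [Module R A] : Prop :=
  ∀ (n : ℕ) (K : Submodule R (Fin n → R)), K.FG →
    ∀ f : K →ₗ[R] A, ∃ g : (Fin n → R) →ₗ[R] A, ∀ x : K, g x = f x

section Helpers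
variable {R : Type u} [Ring R]

noncomputable def embInj (M : Type u) [AddCommGroup M] [Module R M] :
    M →ₗ[R] (Injective.under (ModuleCat.of R M) : ModuleCat.{u} R) :=
  (Injective.ι (ModuleCat.of R M)).hom

lemma embInj_injective (M : Type u) [AddCommGroup M] [Module R M] :
    Function.Injective (embInj (R := R) M) :=
  (ModuleCat.mono_iff_injective (Injective.ι (ModuleCat.of R M))).mp inferInstance

lemma baer_under (M : Type u) [AddCommGroup M] [Module R M] :
    Module.Baer R (Injective.under (ModuleCat.of R M) : ModuleCat.{u} R) := by
  have h1 : CategoryTheory.Injective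
      (ModuleCat.of R (Injective.under (ModuleCat.of R M) : ModuleCat.{u} R)) :=
    Injective.injective_under (ModuleCat.of R M)
  have h2 := Module.injective_module_of_injective_object (inj := h1)
  exact Module.Baer.of_injective h2

lemma directSum_ext_fg (E : ℕ → Type u) [∀ n, AddCommGroup (E n)] [∀ n, Module R (E n)]
    (hE : ∀ n, Module.Baer R (E n)) (L : Submodule R R) (hL : L.FG)
    (f : L →ₗ[R] ⨁ n, E n) : ∃ g : R →ₗ[R] ⨁ n, E n, ∀ x : L, g x = f x := by
  classical
  obtain ⟨t, ht⟩ := hL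
  subst ht
  let s : Finset ℕ := t.attach.biUnion fun r =>
    DFinsupp.support (f ⟨r.1, Submodule.subset_span r.2⟩)
  have hsupp : ∀ (x : Submodule.span R (t : Set R)) (m : ℕ), m ∉ s → f x m = 0 := by
    rintro ⟨x, hx⟩ m hm
    induction hx using Submodule.span_induction with
    | mem r hr =>
        have : m ∉ DFinsupp.support (f ⟨r, Submodule.subset_span hr⟩) := by
          intro hmem
          exact hm (Finset.mem_biUnion.mpr ⟨⟨r, hr⟩, Finset.mem_attach _ _, hmem⟩)
        simpa using DFinsupp.notMem_support_iff.mp this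
    | zero => rw [show (⟨0, _⟩ : Submodule.span R (t : Set R)) = 0 from rfl, map_zero]; rfl
    | add x y hx hy ihx ihy =>
        rw [show (⟨x + y, _⟩ : Submodule.span R (t : Set R)) = ⟨x, hx⟩ + ⟨y, hy⟩ from rfl, map_add,
          DirectSum.add_apply, ihx, ihy, add_zero]
    | smul a x hx ih =>
        rw [show (⟨a • x, _⟩ : Submodule.span R (t : Set R)) = a • ⟨x, hx⟩ from rfl, map_smul,
          DirectSum.smul_apply, ih, smul_zero]
  have hcomp := fun m : ℕ =>
    hE m (Submodule.span R (t : Set R)) ((DirectSum.component R ℕ E m).comp f)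
  choose gm hgm using hcomp
  refine ⟨∑ m ∈ s, (DirectSum.lof R ℕ E m).comp (gm m), fun x => ?_⟩
  refine DFinsupp.ext fun k => ?_
  rw [LinearMap.sum_apply, DFinsupp.finset_sum_apply]
  have hterm : ∀ m ∈ s, ((DirectSum.lof R ℕ E m).comp (gm m)) (x : R) k
      = (DirectSum.of E m (f x m) : ⨁ n, E n) k := by
    intro m _
    have : gm m (x : R) = f x m := by
      rw [hgm m (x : R) x.2]
      congr 1
    simp only [LinearMap.comp_apply, this]
    rfl
  rw [Finset.sum_congr rfl hterm]
  by_cases hk : k ∈ s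
  · rw [Finset.sum_eq_single k (fun m _ hmk => DirectSum.of_eq_of_ne _ _ _ (Ne.symm hmk))
      (fun h => absurd hk h), DirectSum.of_eq_same]
  · rw [Finset.sum_eq_zero (fun m hm => DirectSum.of_eq_of_ne _ _ _ (by rintro rfl; exact hk hm)),
      hsupp x k hk]

end Helpers

theorem noetherian_of_absolutelySelfPure_imp_quasiInjective (R : Type u) [Ring R]
    (h : ∀ (M : Type u) [AddCommGroup M] [Module R M],
      AbsolutelySelfPure R M → IsQuasiInjective R M) :
    IsNoetherian R R := by
  classical
  rw [← monotone_stabilizes_iff_noetherian]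
  intro I
  -- injective modules over the quotients
  let E : ℕ → Type u := fun n => (Injective.under (ModuleCat.of R (R ⧸ I n)) : ModuleCat.{u} R)
  let j : ∀ n, (R ⧸ I n) →ₗ[R] E n := fun n => embInj _
  have hjinj : ∀ n, Function.Injective (j n) := fun n => embInj_injective _
  have hbaer : ∀ n, Module.Baer R (E n) := fun n => baer_under _
  set D := ⨁ n, E n with hD
  -- the big injective module containing D
  let Eb : Type u := (Injective.under (ModuleCat.of R D) : ModuleCat.{u} R)
  let ib : D →ₗ[R] Eb := embInj D
  have hibinj : Function.Injective ib := embInj_injective D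
  have hbaerEb : Module.Baer R Eb := baer_under D
  -- P := D × Eb is "absolutely self pure"
  have hASP : AbsolutelySelfPure R (D × Eb) := by
    intro L hLfg f _
    obtain ⟨g₁, hg₁⟩ := directSum_ext_fg E hbaer L hLfg ((LinearMap.fst R D Eb).comp f)
    obtain ⟨g₂, hg₂⟩ := hbaerEb L ((LinearMap.snd R D Eb).comp f)
    refine ⟨g₁.prod g₂, fun x => ?_⟩
    have h2 : g₂ (x : R) = (f x).2 := by rw [hg₂ (x : R) x.2]; rfl
    have h1 : g₁ (x : R) = (f x).1 := by rw [hg₁ x]; rfl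
    exact Prod.ext h1 h2
  have hQI := h (D × Eb) hASP
  -- retraction π : Eb → D
  let k : D →ₗ[R] (D × Eb) := (LinearMap.inr R D Eb).comp ib
  have hkinj : Function.Injective k := by
    intro a b hab
    exact hibinj (congrArg Prod.snd hab)
  let e : D ≃ₗ[R] LinearMap.range k := LinearEquiv.ofInjective k hkinj
  obtain ⟨g, hg⟩ := hQI (LinearMap.range k)
    ((LinearMap.inl R D Eb).comp e.symm.toLinearMap)
  let π : Eb →ₗ[R] D := (LinearMap.fst R D Eb).comp (g.comp (LinearMap.inr R D Eb))
  have hπ : ∀ d : D, π (ib d) = d := by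
    intro d
    have h1 : ((e d : LinearMap.range k) : D × Eb) = ((0 : D), ib d) := rfl
    have h2 : g ((0 : D), ib d) = ((d, 0) : D × Eb) := by
      have := hg (e d)
      rw [h1] at this
      rw [this]
      simp only [LinearMap.comp_apply, LinearEquiv.coe_coe, LinearEquiv.symm_apply_apply]
      rfl
    simp only [π, LinearMap.comp_apply, LinearMap.inr_apply, h2, LinearMap.fst_apply]
  -- the gluing map F on the union ideal
  let S : Submodule R R := ⨆ n, I n
  let G : ℕ → R →ₗ[R] D := fun n =>
    ∑ m ∈ Finset.range n, (DirectSum.lof R ℕ E m).comp ((j m).comp (I m).mkQ)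
  have hGapp : ∀ n x, G n x
      = ∑ m ∈ Finset.range n, DirectSum.lof R ℕ E m (j m ((I m).mkQ x)) := by
    intro n x
    simp [G, LinearMap.sum_apply]
  have hGc : ∀ (a b : ℕ) (x : R), x ∈ I a → x ∈ I b → G a x = G b x := by
    have key : ∀ (a b : ℕ), a ≤ b → ∀ x : R, x ∈ I a → G b x = G a x := by
      intro a b hab x hx
      rw [hGapp, hGapp]
      refine (Finset.sum_subset (by simpa using Finset.range_subset_range.mpr hab) ?_).symm
      intro m hm hma
      rw [Finset.mem_range] at hma
      have hxm : x ∈ I m := I.monotone (le_of_not_gt hma) hx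
      rw [show (I m).mkQ x = 0 from (Submodule.Quotient.mk_eq_zero _).mpr hxm,
        map_zero, map_zero]
    intro a b x hxa hxb
    rcases le_total a b with hab | hba
    · exact (key a b hab x hxa).symm
    · exact key b a hba x hxb
  have hmem : ∀ x : S, ∃ n, (x : R) ∈ I n := fun x =>
    (Submodule.mem_iSup_of_chain I (x : R)).mp x.2
  let sel : S → ℕ := fun x => (hmem x).choose
  have hsel : ∀ x : S, (x : R) ∈ I (sel x) := fun x => (hmem x).choose_spec
  let F : S →ₗ[R] D :=
    { toFun := fun x => G (sel x) x
      map_add' := by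
        intro x y
        show G (sel (x + y)) ((x + y : S) : R) = G (sel x) x + G (sel y) y
        set N := max (max (sel x) (sel y)) (sel (x + y)) with hNdef
        have hx : (x : R) ∈ I N := I.monotone (le_max_of_le_left (le_max_left _ _)) (hsel x)
        have hy : (y : R) ∈ I N := I.monotone (le_max_of_le_left (le_max_right _ _)) (hsel y)
        have hxy : ((x + y : S) : R) ∈ I N := I.monotone (le_max_right _ _) (hsel (x + y))
        rw [hGc (sel (x + y)) N _ (hsel (x + y)) hxy,
          hGc (sel x) N _ (hsel x) hx, hGc (sel y) N _ (hsel y) hy]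
        push_cast
        rw [map_add]
      map_smul' := by
        intro r x
        have hrx : ((r • x : S) : R) ∈ I (sel x) := (I (sel x)).smul_mem r (hsel x)
        show G (sel (r • x)) ((r • x : S) : R) = (RingHom.id R) r • G (sel x) x
        rw [hGc (sel (r • x)) (sel x) _ (hsel (r • x)) hrx]
        push_cast
        rw [map_smul]
        rfl }
  have hFapp : ∀ (x : S) (m : ℕ), (F x : ⨁ n, E n) m = j m ((I m).mkQ x) := by
    intro x m
    show (G (sel x) x : ⨁ n, E n) m = j m ((I m).mkQ x)
    rw [hGapp]
    simp only [DirectSum.lof_eq_of]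
    rw [DFinsupp.finset_sum_apply]
    by_cases hm : m < sel x
    · rw [Finset.sum_eq_single m
        (fun b _ hbm => DirectSum.of_eq_of_ne _ _ _ (Ne.symm hbm))
        (fun hc => absurd (Finset.mem_range.mpr hm) hc)]
      exact DirectSum.of_eq_same _ _
    · have hxm : (x : R) ∈ I m := I.monotone (le_of_not_gt hm) (hsel x)
      rw [Finset.sum_eq_zero (fun b hb => DirectSum.of_eq_of_ne _ _ _
        (by rintro rfl; exact hm (Finset.mem_range.mp hb))),
        show (I m).mkQ (x : R) = 0 from (Submodule.Quotient.mk_eq_zero _).mpr hxm,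
        map_zero]
  -- extend F along S ⊆ R using injectivity of Eb and the retraction π
  obtain ⟨g', hg'⟩ := hbaerEb S (ib.comp F)
  let gext : R →ₗ[R] D := π.comp g'
  have hgext : ∀ x : S, gext x = F x := by
    intro x
    simp only [gext, LinearMap.comp_apply]
    rw [hg' (x : R) x.2]
    show π (ib (F ⟨(x : R), x.2⟩)) = F x
    rw [hπ]
  -- finish: the chain stabilizes
  let d : ⨁ n, E n := gext 1
  let N : ℕ := (DFinsupp.support d).sup id + 1
  have hdN : ∀ m, N ≤ m → (d : ⨁ n, E n) m = 0 := by
    intro m hm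
    by_contra hne
    have : m ∈ DFinsupp.support d := DFinsupp.mem_support_iff.mpr hne
    have : m ≤ (DFinsupp.support d).sup id := Finset.le_sup (f := id) this
    omega
  have hSle : ∀ m, N ≤ m → S ≤ I m := by
    intro m hm x hx
    have h1 : F ⟨x, hx⟩ = x • d := by
      have : gext (x • (1 : R)) = x • gext 1 := map_smul gext x 1
      rw [smul_eq_mul, mul_one] at this
      rw [← hgext ⟨x, hx⟩]
      exact this
    have h2 : j m ((I m).mkQ x) = 0 := by
      rw [← hFapp ⟨x, hx⟩ m, h1, DirectSum.smul_apply, hdN m hm, smul_zero]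
    have h3 : (I m).mkQ x = 0 := hjinj m (by rw [h2]; exact (map_zero _).symm)
    exact (Submodule.Quotient.mk_eq_zero _).mp h3
  refine ⟨N, fun m hm => ?_⟩
  have hImS : ∀ k, I k ≤ S := fun k => le_iSup (fun n => I n) k
  exact le_antisymm (le_trans (hImS N) (hSle m hm)) (le_trans (hImS m) (hSle N le_rfl))
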